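/- The fibers of the map w : ℂ² → ℝ³ are exactly the orbits of the diagonal circle action: if ζ = (ζ₁, ζ₂) and ζ' = (ζ'₁, ζ'₂) in ℂ² satisfy w(ζ) = w(ζ'), then there exists θ ∈ ℝ with ζ'₁ = e^{iθ}ζ₁ and ζ'₂ = e^{iθ}ζ₂. -/

import Mathlib

noncomputable section

/-- The map `w : ℂ² → ℝ³`, `w(ζ₁, ζ₂) = (½(|ζ₁|² − |ζ₂|²), Re(ζ₁ conj ζ₂), Im(ζ₁ conj ζ₂))`,
identifying the quotient of configuration space by rotations with (a cone over) the shape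
sphere. -/
def shapeMap (ζ : ℂ × ℂ) : ℝ × ℝ × ℝ :=
  ((1 / 2) * (‖ζ.1‖ ^ 2 - ‖ζ.2‖ ^ 2),
    (ζ.1 * starRingEnd ℂ ζ.2).re,
    (ζ.1 * starRingEnd ℂ ζ.2).im)

set_option maxHeartbeats 1000000 in
/-- The fibers of `w : ℂ² → ℝ³` are exactly the orbits of the diagonal circle action:
if `w(ζ) = w(ζ')` then `ζ' = (e^{iθ}ζ₁, e^{iθ}ζ₂)` for some `θ ∈ ℝ`. -/
theorem shapeMap_fibers_are_circle_orbits
    (ζ ζ' : ℂ × ℂ) (h : shapeMap ζ = shapeMap ζ') :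
    ∃ θ : ℝ, ζ'.1 = Complex.exp (θ * Complex.I) * ζ.1 ∧
      ζ'.2 = Complex.exp (θ * Complex.I) * ζ.2 := by
  have h1 : (1 / 2 : ℝ) * (‖ζ.1‖ ^ 2 - ‖ζ.2‖ ^ 2)
      = (1 / 2) * (‖ζ'.1‖ ^ 2 - ‖ζ'.2‖ ^ 2) :=
    congrArg Prod.fst h
  have h2 : (ζ.1 * starRingEnd ℂ ζ.2).re = (ζ'.1 * starRingEnd ℂ ζ'.2).re :=
    congrArg (fun p => p.2.1) h
  have h3 : (ζ.1 * starRingEnd ℂ ζ.2).im = (ζ'.1 * starRingEnd ℂ ζ'.2).im :=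
    congrArg (fun p => p.2.2) h
  have hmul : ζ.1 * starRingEnd ℂ ζ.2 = ζ'.1 * starRingEnd ℂ ζ'.2 :=
    Complex.ext h2 h3
  have habsmul : ‖ζ.1‖ * ‖ζ.2‖
      = ‖ζ'.1‖ * ‖ζ'.2‖ := by
    have := congrArg (fun z : ℂ => ‖z‖) hmul
    simpa [map_mul, Complex.norm_conj, norm_mul] using this
  set a := ‖ζ.1‖ with ha
  set b := ‖ζ.2‖ with hb
  set a' := ‖ζ'.1‖ with ha'
  set b' := ‖ζ'.2‖ with hb'
  have hanneg : 0 ≤ a := norm_nonneg _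
  have hbnneg : 0 ≤ b := norm_nonneg _
  have ha'nneg : 0 ≤ a' := norm_nonneg _
  have hb'nneg : 0 ≤ b' := norm_nonneg _
  have hdiff : a ^ 2 - b ^ 2 = a' ^ 2 - b' ^ 2 := by linarith
  have hsum : a ^ 2 + b ^ 2 = a' ^ 2 + b' ^ 2 := by
    have habsq : (a * b) ^ 2 = (a' * b') ^ 2 := by rw [habsmul]
    have hsq : (a ^ 2 + b ^ 2) ^ 2 = (a' ^ 2 + b' ^ 2) ^ 2 := by nlinarith [hdiff, habsq]
    have hxn : (0:ℝ) ≤ a ^ 2 + b ^ 2 := by positivity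
    have hyn : (0:ℝ) ≤ a' ^ 2 + b' ^ 2 := by positivity
    nlinarith [hsq, hxn, hyn, sq_nonneg ((a ^ 2 + b ^ 2) - (a' ^ 2 + b' ^ 2)),
      sq_nonneg ((a ^ 2 + b ^ 2) + (a' ^ 2 + b' ^ 2))]
  have haa : a = a' := by nlinarith
  have hbb : b = b' := by nlinarith
  -- helper-like reasoning inline
  by_cases hz2 : ζ.2 = 0
  · have hz'2 : ζ'.2 = 0 := by
      have : b' = 0 := by rw [← hbb, hb, hz2]; simp
      exact norm_eq_zero.mp (by rw [← hb']; exact this)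
    by_cases hz1 : ζ.1 = 0
    · have hz'1 : ζ'.1 = 0 := by
        have : a' = 0 := by rw [← haa, ha, hz1]; simp
        exact norm_eq_zero.mp (by rw [← ha']; exact this)
      exact ⟨0, by simp [hz'1, hz1], by simp [hz'2, hz2]⟩
    · set u := ζ'.1 / ζ.1 with hu
      have hz1' : ‖ζ.1‖ ≠ 0 := norm_ne_zero_iff.mpr hz1
      have heqa : ‖ζ'.1‖ = ‖ζ.1‖ := by
        rw [← ha', ← ha]; exact haa.symm
      have habsu : ‖u‖ = 1 := by
        rw [hu, norm_div, heqa, div_self hz1']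
      refine ⟨Complex.arg u, ?_, by simp [hz'2, hz2]⟩
      have hexp := Complex.norm_mul_exp_arg_mul_I u
      rw [habsu] at hexp
      simp only [Complex.ofReal_one, one_mul] at hexp
      rw [hexp, hu, div_mul_cancel₀ _ hz1]
  · have hb0 : b ≠ 0 := by
      rw [hb]; exact norm_ne_zero_iff.mpr hz2
    have hz'2 : ζ'.2 ≠ 0 := by
      intro hc
      apply hb0
      rw [hbb, hb', hc]; simp
    set u := ζ'.2 / ζ.2 with hu
    have hz2' : ‖ζ.2‖ ≠ 0 := norm_ne_zero_iff.mpr hz2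
    have heqb : ‖ζ'.2‖ = ‖ζ.2‖ := by
      rw [← hb', ← hb]; exact hbb.symm
    have habsu : ‖u‖ = 1 := by
      rw [hu, norm_div, heqb, div_self hz2']
    have hu2 : ζ'.2 = u * ζ.2 := by rw [hu, div_mul_cancel₀ _ hz2]
    have hconju : starRingEnd ℂ u * u = 1 := by
      have := Complex.normSq_eq_norm_sq u
      rw [habsu] at this
      have h' : Complex.normSq u = 1 := by rw [this]; norm_num
      have := Complex.mul_conj u
      rw [h'] at this
      rw [mul_comm] at this
      simpa using this
    have hu1 : ζ'.1 = u * ζ.1 := by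
      have hc2 : starRingEnd ℂ ζ.2 ≠ 0 := by
        simpa using hz2
      have hkey : ζ.1 * starRingEnd ℂ ζ.2
          = (ζ'.1 * starRingEnd ℂ u) * starRingEnd ℂ ζ.2 := by
        rw [hmul, hu2, map_mul]; ring
      have h4 : ζ.1 = ζ'.1 * starRingEnd ℂ u := mul_right_cancel₀ hc2 hkey
      calc ζ'.1 = ζ'.1 * (starRingEnd ℂ u * u) := by rw [hconju]; ring
        _ = (ζ'.1 * starRingEnd ℂ u) * u := by ring
        _ = u * ζ.1 := by rw [← h4]; ring
    refine ⟨Complex.arg u, ?_, ?_⟩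
    · have := Complex.norm_mul_exp_arg_mul_I u
      rw [habsu] at this
      simp only [Complex.ofReal_one, one_mul] at this
      rw [this, ← hu1]
    · have := Complex.norm_mul_exp_arg_mul_I u
      rw [habsu] at this
      simp only [Complex.ofReal_one, one_mul] at this
      rw [this, ← hu2]
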